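/- The polynomial P(z) = |z|⁴ + t|z|² Re(z²) on ℂ (t ∈ ℝ, t ≥ 0) is subharmonic on ℂ if and only if t ≤ 4/3. -/

import Mathlib

/-- Subharmonicity on a set: upper semicontinuity together with the sub-mean value
inequality on all closed discs contained in the set. -/
def SubharmonicOn (u : ℂ → ℝ) (Ω : Set ℂ) : Prop :=
  UpperSemicontinuousOn u Ω ∧
    ∀ z ∈ Ω, ∀ ρ : ℝ, 0 < ρ → Metric.closedBall z ρ ⊆ Ω →
      u z ≤ (2 * Real.pi)⁻¹ *
        ∫ θ in (0:ℝ)..(2 * Real.pi), u (z + (ρ : ℂ) * Complex.exp ((θ : ℂ) * Complex.I))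

lemma stmt8_P_eq (t : ℝ) (z : ℂ) : ‖z‖ ^ 4 + t * ‖z‖ ^ 2 * (z ^ 2).re
    = (z.re^2+z.im^2)^2 + t*(z.re^2+z.im^2)*(z.re^2-z.im^2) := by
  rw [show (4:ℕ) = 2*2 from rfl, pow_mul, Complex.sq_norm, sq z, Complex.mul_re,
    Complex.normSq_apply]
  ring

lemma stmt8_re_im (z : ℂ) (r θ : ℝ) :
    (z + r * Complex.exp (θ * Complex.I)).re = z.re + r * Real.cos θ ∧
    (z + r * Complex.exp (θ * Complex.I)).im = z.im + r * Real.sin θ := by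
  constructor <;> simp [Complex.exp_mul_I, Complex.add_re, Complex.add_im, Complex.mul_re,
    Complex.mul_im, Complex.cos_ofReal_re, Complex.sin_ofReal_re]

lemma stmt8_deriv (A B C D E G H θ : ℝ) :
    HasDerivAt (fun x : ℝ => A*x + B*Real.sin x + C*Real.cos x + D*(Real.sin x*Real.cos x)
      + E*Real.sin x^2 + G*Real.sin x^3 + H*Real.cos x^3)
      (A + B*Real.cos θ - C*Real.sin θ + D*(Real.cos θ^2 - Real.sin θ^2)
        + E*(2*Real.sin θ*Real.cos θ) + G*(3*Real.sin θ^2*Real.cos θ)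
        - H*(3*Real.cos θ^2*Real.sin θ)) θ := by
  have hs := Real.hasDerivAt_sin θ
  have hc := Real.hasDerivAt_cos θ
  have h := ((((((hasDerivAt_id θ).const_mul A).add (hs.const_mul B)).add
      (hc.const_mul C)).add ((hs.mul hc).const_mul D)).add
      ((hs.pow 2).const_mul E)).add ((hs.pow 3).const_mul G) |>.add ((hc.pow 3).const_mul H)
  refine h.congr_deriv ?_
  ring

lemma stmt8_integral (t a b r : ℝ) :
    ∫ θ in (0:ℝ)..(2*Real.pi),
      (((a+r*Real.cos θ)^2+(b+r*Real.sin θ)^2)^2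
        + t*((a+r*Real.cos θ)^2+(b+r*Real.sin θ)^2)*((a+r*Real.cos θ)^2-(b+r*Real.sin θ)^2))
    = 2*Real.pi*(((a^2+b^2)^2 + t*(a^2+b^2)*(a^2-b^2))
        + r^4 + r^2*(4*(a^2+b^2)+3*t*(a^2-b^2))) := by
  set A : ℝ := r^4 + 4*b^2*r^2 - 3*b^2*r^2*t + b^4 - b^4*t + 4*a^2*r^2 + 3*a^2*r^2*t
      + 2*a^2*b^2 + a^4 + a^4*t with hA
  set B : ℝ := 4*a*r^3 + 4*a*r^3*t + 4*a*b^2*r + 4*a^3*r + 4*a^3*r*t with hB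
  set C : ℝ := -4*b*r^3 + 4*b*r^3*t - 4*b^3*r + 4*b^3*r*t - 4*a^2*b*r with hC
  set D : ℝ := r^4*t - 2*b^2*r^2 + 3*b^2*r^2*t + 2*a^2*r^2 + 3*a^2*r^2*t with hD
  set E : ℝ := 4*a*b*r^2 with hE
  set G : ℝ := -(4/3)*a*r^3*t with hG
  set H : ℝ := -(4/3)*b*r^3*t with hH
  have key : ∀ θ ∈ Set.uIcc (0:ℝ) (2*Real.pi),
      HasDerivAt (fun x : ℝ => A*x + B*Real.sin x + C*Real.cos x + D*(Real.sin x*Real.cos x)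
        + E*Real.sin x^2 + G*Real.sin x^3 + H*Real.cos x^3)
      (((a+r*Real.cos θ)^2+(b+r*Real.sin θ)^2)^2
        + t*((a+r*Real.cos θ)^2+(b+r*Real.sin θ)^2)*((a+r*Real.cos θ)^2-(b+r*Real.sin θ)^2))
      θ := by
    intro θ _
    have h := stmt8_deriv A B C D E G H θ
    convert h using 1
    rw [hA, hB, hC, hD, hE, hG, hH]
    linear_combination (r^4 + r^4 * (Real.cos θ)^2 + r^4 * (Real.sin θ)^2
      + r^4 * t * (Real.cos θ)^2 - r^4 * t * (Real.sin θ)^2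
      + 4 * b * r^3 * (Real.sin θ) - 4 * b * r^3 * t * (Real.sin θ)
      + 4 * b^2 * r^2 - 3 * b^2 * r^2 * t
      + 4 * a * r^3 * (Real.cos θ) + 4 * a * r^3 * t * (Real.cos θ)
      + 4 * a^2 * r^2 + 3 * a^2 * r^2 * t) * (Real.sin_sq_add_cos_sq θ)
  have hint : IntervalIntegrable (fun θ : ℝ =>
      (((a+r*Real.cos θ)^2+(b+r*Real.sin θ)^2)^2
        + t*((a+r*Real.cos θ)^2+(b+r*Real.sin θ)^2)*((a+r*Real.cos θ)^2-(b+r*Real.sin θ)^2)))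
      MeasureTheory.volume 0 (2*Real.pi) := by
    apply Continuous.intervalIntegrable
    fun_prop
  rw [intervalIntegral.integral_eq_sub_of_hasDerivAt key hint]
  simp only [Real.sin_two_pi, Real.cos_two_pi, Real.sin_zero, Real.cos_zero]
  rw [hA]
  ring

lemma stmt8_integral' (t r : ℝ) (z : ℂ) :
    ∫ θ in (0:ℝ)..(2*Real.pi),
      (‖z + r * Complex.exp (θ * Complex.I)‖ ^ 4
        + t * ‖z + r * Complex.exp (θ * Complex.I)‖ ^ 2
          * ((z + r * Complex.exp (θ * Complex.I)) ^ 2).re)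
    = 2*Real.pi*(((z.re^2+z.im^2)^2 + t*(z.re^2+z.im^2)*(z.re^2-z.im^2))
        + r^4 + r^2*(4*(z.re^2+z.im^2)+3*t*(z.re^2-z.im^2))) := by
  rw [← stmt8_integral t z.re z.im r]
  apply intervalIntegral.integral_congr
  intro θ _
  dsimp only
  rw [stmt8_P_eq t, (stmt8_re_im z r θ).1, (stmt8_re_im z r θ).2]

/-- `P(z) = |z|⁴ + t|z|²Re(z²)` (with `t ≥ 0`) is subharmonic on `ℂ`
iff `t ≤ 4/3`. -/
theorem stmt_8 (t : ℝ) (ht : 0 ≤ t) :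
    SubharmonicOn (fun z => ‖z‖ ^ 4 + t * ‖z‖ ^ 2 * (z ^ 2).re) Set.univ
      ↔ t ≤ 4/3 := by
  have hpi := Real.pi_pos
  have h2pi : (2*Real.pi) ≠ 0 := by positivity
  have hcan : ∀ X : ℝ, (2*Real.pi)⁻¹ * (2*Real.pi*X) = X := fun X => by field_simp
  constructor
  · intro h
    by_contra h4
    push_neg at h4
    set ρ : ℝ := Real.sqrt ((3*t-4)/2) with hρdef
    have hρ2 : ρ^2 = (3*t-4)/2 := Real.sq_sqrt (by linarith)
    have hρpos : 0 < ρ := Real.sqrt_pos.mpr (by linarith)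
    have h0 := h.2 Complex.I (Set.mem_univ _) ρ hρpos (Set.subset_univ _)
    rw [stmt8_integral' t ρ Complex.I, hcan] at h0
    rw [show ((fun z => ‖z‖ ^ 4 + t * ‖z‖ ^ 2 * (z ^ 2).re) Complex.I)
      = (Complex.I.re^2+Complex.I.im^2)^2
        + t*(Complex.I.re^2+Complex.I.im^2)*(Complex.I.re^2-Complex.I.im^2)
      from stmt8_P_eq t Complex.I] at h0
    simp only [Complex.I_re, Complex.I_im] at h0
    nlinarith [h0]
  · intro hle
    constructor
    · apply UpperSemicontinuous.upperSemicontinuousOn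
      apply Continuous.upperSemicontinuous
      exact (continuous_norm.pow 4).add
        ((continuous_const.mul (continuous_norm.pow 2)).mul
          (Complex.continuous_re.comp (continuous_pow 2)))
    · intro z _ ρ hρ _
      rw [stmt8_integral' t ρ z, hcan]
      rw [show ((fun z => ‖z‖ ^ 4 + t * ‖z‖ ^ 2 * (z ^ 2).re) z)
        = (z.re^2+z.im^2)^2 + t*(z.re^2+z.im^2)*(z.re^2-z.im^2) from stmt8_P_eq t z]
      nlinarith [sq_nonneg (ρ^2), mul_nonneg (mul_nonneg (sq_nonneg ρ) (sq_nonneg z.re)) ht,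
        mul_nonneg (mul_nonneg (sq_nonneg ρ) (sq_nonneg z.im)) (by linarith : (0:ℝ) ≤ 4 - 3*t),
        mul_nonneg (sq_nonneg ρ) (sq_nonneg z.re)]
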